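/- For every m, d ≥ 1 there exists an integer matrix A ∈ ℤ^{m×md} with largest absolute entry Δ = 2^{d-1} and a right-hand side b such that the integer hull of {x ≥ 0 : Ax = b} has a vertex v with |supp(v)| = m·log₂(Δ) + m. Concretely, A is the block-diagonal matrix with m copies of the row (2^0, ..., 2^{d-1}) and b = (2^d − 1, ..., 2^d − 1); then the all-ones vector is a vertex of the integer hull with support md. -/

import Mathlib

open Finset


open Matrix

/-- The integer hull of `{x ≥ 0 : Ax = b}`. -/
def integerHull {m n : ℕ} (A : Matrix (Fin m) (Fin n) ℤ) (b : Fin m → ℤ) :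
    Set (Fin n → ℝ) :=
  convexHull ℝ
    {x | ∃ z : Fin n → ℤ, (∀ i, 0 ≤ z i) ∧ A.mulVec z = b ∧ x = fun i => (z i : ℝ)}

/-- `v` is a vertex of `P` if `v ∈ P` and `v` is not in the convex hull of `P \ {v}`. -/
def IsVertex {n : ℕ} (P : Set (Fin n → ℝ)) (v : Fin n → ℝ) : Prop :=
  v ∈ P ∧ v ∉ convexHull ℝ (P \ {v})

/-- For every `m, d ≥ 1` there is an integer `m × md` matrix with largest absolute
entry `Δ = 2^{d-1}` and a right-hand side `b` such that the all-ones vector is a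
vertex of the integer hull with full support `md = m·log₂(Δ) + m`. -/
lemma key_nat (d : ℕ) : ∀ w : ℕ → ℕ,
    (∑ k ∈ Finset.range d, 2 ^ k * w k) + 1 = 2 ^ d →
    (d ≤ ∑ k ∈ Finset.range d, w k ∧
      ((∑ k ∈ Finset.range d, w k) = d → ∀ k < d, w k = 1)) := by
  induction d with
  | zero => intro w h; simp
  | succ d ih =>
    intro w h
    rw [Finset.sum_range_succ'] at h
    -- h : ∑ k ∈ range d, 2^(k+1) * w (k+1) + 2^0 * w 0 + 1 = 2^(d+1)
    have hrw : ∑ x ∈ Finset.range d, 2 ^ (x + 1) * w (x + 1)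
        = 2 * ∑ x ∈ Finset.range d, 2 ^ x * w (x + 1) := by
      rw [Finset.mul_sum]; exact Finset.sum_congr rfl fun k _ => by ring
    rw [hrw] at h
    have h2 : 2 * (∑ k ∈ Finset.range d, 2 ^ k * w (k + 1)) + w 0 + 1 = 2 * 2 ^ d := by
      simp only [pow_zero, one_mul, pow_succ] at h; omega
    have hodd : w 0 % 2 = 1 := by omega
    set a := w 0 / 2 with ha
    have hw0 : w 0 = 2 * a + 1 := by omega
    have hS : (∑ k ∈ Finset.range d, 2 ^ k * w (k + 1)) + (a + 1) = 2 ^ d := by omega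
    rcases Nat.eq_zero_or_pos d with rfl | hdpos
    · simp only [Finset.range_zero, Finset.sum_empty, pow_zero] at hS ⊢
      have : a = 0 := by omega
      constructor
      · rw [Finset.sum_range_one]; omega
      · intro _ k hk
        interval_cases k
        omega
    · obtain ⟨e, rfl⟩ : ∃ e, d = e + 1 := ⟨d - 1, by omega⟩
      set w' : ℕ → ℕ := fun k => if k = 0 then a + w 1 else w (k + 1) with hw'
      have hsum1 : ∑ k ∈ Finset.range (e + 1), 2 ^ k * w' k
          = a + ∑ k ∈ Finset.range (e + 1), 2 ^ k * w (k + 1) := by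
        rw [Finset.sum_range_succ', Finset.sum_range_succ']
        simp only [hw']
        simp
        ring_nf
      have hsum2 : ∑ k ∈ Finset.range (e + 1), w' k
          = a + ∑ k ∈ Finset.range (e + 1), w (k + 1) := by
        rw [Finset.sum_range_succ', Finset.sum_range_succ']
        simp only [hw']
        simp
        omega
      set S := ∑ k ∈ Finset.range (e + 1), w (k + 1) with hSdef
      have hS' : (∑ k ∈ Finset.range (e + 1), 2 ^ k * w' k) + 1 = 2 ^ (e + 1) := by
        rw [hsum1]; omega
      obtain ⟨ihle, iheq⟩ := ih w' hS'
      rw [hsum2] at ihle iheq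
      have htot : ∑ k ∈ Finset.range (e + 1 + 1), w k = w 0 + S := by
        rw [Finset.sum_range_succ']; omega
      rw [htot]
      constructor
      · omega
      · intro heq k hk
        have ha0 : a = 0 := by omega
        have hall := iheq (by omega)
        rcases Nat.eq_zero_or_pos k with rfl | hkpos
        · omega
        · rcases Nat.eq_or_lt_of_le hkpos with rfl | h2
          · have := hall 0 (by omega)
            simpa [hw', ha0] using this
          · have := hall (k - 1) (by omega)
            simp only [hw'] at this
            rw [if_neg (by omega)] at this
            have hk1 : k - 1 + 1 = k := by omega
            rwa [hk1] at this


lemma key_int (d : ℕ) (z : Fin d → ℤ) (hz : ∀ k, 0 ≤ z k)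
    (h : ∑ k : Fin d, 2 ^ (k : ℕ) * z k = 2 ^ d - 1) :
    (d : ℤ) ≤ ∑ k, z k ∧ ((∑ k, z k) = (d : ℤ) → ∀ k, z k = 1) := by
  set w : ℕ → ℕ := fun k => if hk : k < d then (z ⟨k, hk⟩).toNat else 0 with hw
  have hcast : ∀ k : Fin d, (w (k : ℕ) : ℤ) = z k := by
    intro k
    simp only [hw]
    rw [dif_pos k.2, Int.toNat_of_nonneg (hz _)]
  have hb1 : ((∑ k ∈ Finset.range d, 2 ^ k * w k : ℕ) : ℤ) = ∑ k : Fin d, 2 ^ (k : ℕ) * z k := by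
    push_cast
    rw [← Fin.sum_univ_eq_sum_range (fun k => (2 : ℤ) ^ k * (w k : ℤ)) d]
    exact Finset.sum_congr rfl fun k _ => by rw [hcast]
  have hb2 : ((∑ k ∈ Finset.range d, w k : ℕ) : ℤ) = ∑ k : Fin d, z k := by
    push_cast
    rw [← Fin.sum_univ_eq_sum_range (fun k => ((w k : ℤ))) d]
    exact Finset.sum_congr rfl fun k _ => hcast k
  have hnat : (∑ k ∈ Finset.range d, 2 ^ k * w k) + 1 = 2 ^ d := by
    have h3 : ((∑ k ∈ Finset.range d, 2 ^ k * w k : ℕ) : ℤ) + 1 = ((2 ^ d : ℕ) : ℤ) := by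
      rw [hb1, h]; push_cast; ring
    exact_mod_cast h3
  obtain ⟨h1, h2⟩ := key_nat d w hnat
  refine ⟨?_, ?_⟩
  · rw [← hb2]; exact_mod_cast h1
  · intro heq k
    have hS : (∑ k ∈ Finset.range d, w k) = d := by
      have : ((∑ k ∈ Finset.range d, w k : ℕ) : ℤ) = (d : ℤ) := by rw [hb2, heq]
      exact_mod_cast this
    have h4 := h2 hS k k.2
    rw [← hcast k, h4, Nat.cast_one]

theorem stmt14 (m d : ℕ) (hm : 1 ≤ m) (hd : 1 ≤ d) :
    ∃ (A : Matrix (Fin m) (Fin (m * d)) ℤ) (b : Fin m → ℤ),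
      (∀ j i, |A j i| ≤ 2 ^ (d - 1)) ∧ (∃ j i, |A j i| = 2 ^ (d - 1)) ∧
      IsVertex (integerHull A b) (fun _ => 1) ∧
      (Function.support (fun _ : Fin (m * d) => (1 : ℝ))).ncard = m * d ∧
      ((m * d : ℕ) : ℝ) = m * Real.logb 2 ((2 : ℝ) ^ (d - 1)) + m := by
  have hd0 : 0 < d := hd
  set A : Matrix (Fin m) (Fin (m * d)) ℤ :=
    fun j i => if (i : ℕ) / d = (j : ℕ) then 2 ^ ((i : ℕ) % d) else 0 with hA
  set b : Fin m → ℤ := fun _ => 2 ^ d - 1 with hb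
  set e : Fin m × Fin d ≃ Fin (m * d) := finProdFinEquiv with he
  have heval : ∀ (p : Fin m × Fin d), ((e p : Fin (m * d)) : ℕ) = (p.2 : ℕ) + d * (p.1 : ℕ) := by
    intro p; rfl
  have hAe : ∀ (j j' : Fin m) (k : Fin d),
      A j (e (j', k)) = if j' = j then 2 ^ (k : ℕ) else 0 := by
    intro j j' k
    have hdiv : ((e (j', k) : Fin (m * d)) : ℕ) / d = (j' : ℕ) := by
      rw [heval]
      simp only
      rw [Nat.add_mul_div_left _ _ hd0, Nat.div_eq_of_lt k.2, Nat.zero_add]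
    have hmod : ((e (j', k) : Fin (m * d)) : ℕ) % d = (k : ℕ) := by
      rw [heval]
      simp only
      rw [Nat.add_mul_mod_self_left, Nat.mod_eq_of_lt k.2]
    simp only [hA, hdiv, hmod]
    by_cases hjj : j' = j
    · rw [if_pos (by rw [hjj]), if_pos hjj]
    · rw [if_neg (fun hc => hjj (Fin.val_injective hc)), if_neg hjj]
  have hmv : ∀ (z : Fin (m * d) → ℤ) (j : Fin m),
      A.mulVec z j = ∑ k : Fin d, 2 ^ (k : ℕ) * z (e (j, k)) := by
    intro z j
    have h1 : A.mulVec z j = ∑ p : Fin m × Fin d, A j (e p) * z (e p) := by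
      rw [Matrix.mulVec, dotProduct]
      exact (Equiv.sum_comp e (fun i => A j i * z i)).symm
    rw [h1, Fintype.sum_prod_type]
    rw [Finset.sum_eq_single j]
    · exact Finset.sum_congr rfl fun k _ => by rw [hAe, if_pos rfl]
    · intro j' _ hne
      apply Finset.sum_eq_zero
      intro k _
      rw [hAe, if_neg hne, zero_mul]
    · intro hj; exact absurd (Finset.mem_univ j) hj
  have hgeom : ∑ k : Fin d, (2 : ℤ) ^ (k : ℕ) = 2 ^ d - 1 := by
    rw [Fin.sum_univ_eq_sum_range (fun k => (2 : ℤ) ^ k) d]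
    have := geom_sum_mul (2 : ℤ) d
    simpa using this
  have hones : A.mulVec (fun _ => 1) = b := by
    funext j
    rw [hmv]
    simpa using hgeom
  have htotal : ∀ z : Fin (m * d) → ℤ,
      ∑ i, z i = ∑ j : Fin m, ∑ k : Fin d, z (e (j, k)) := by
    intro z
    rw [← Equiv.sum_comp e z, Fintype.sum_prod_type]
  have hconst : ∑ _j : Fin m, (d : ℤ) = ((m * d : ℕ) : ℤ) := by
    simp [Finset.sum_const]
  have hint : ∀ z : Fin (m * d) → ℤ, (∀ i, 0 ≤ z i) → A.mulVec z = b →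
      (((m * d : ℕ) : ℤ) ≤ ∑ i, z i ∧ (∑ i, z i = ((m * d : ℕ) : ℤ) → ∀ i, z i = 1)) := by
    intro z hz hmvz
    have hblock : ∀ j : Fin m, ((d : ℤ) ≤ ∑ k : Fin d, z (e (j, k)) ∧
        ((∑ k : Fin d, z (e (j, k))) = (d : ℤ) → ∀ k, z (e (j, k)) = 1)) := by
      intro j
      apply key_int d (fun k => z (e (j, k))) (fun k => hz _)
      have h5 := congrFun hmvz j
      rw [hmv] at h5
      simpa [hb] using h5
    have hsum := htotal z
    have hge : ((m * d : ℕ) : ℤ) ≤ ∑ i, z i := by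
      rw [hsum, ← hconst]
      exact Finset.sum_le_sum (fun j _ => (hblock j).1)
    refine ⟨hge, ?_⟩
    intro heq i
    have hball : ∀ j : Fin m, ∑ k : Fin d, z (e (j, k)) = (d : ℤ) := by
      by_contra hc
      push_neg at hc
      obtain ⟨j0, hj0⟩ := hc
      have hlt : ∑ _j : Fin m, (d : ℤ) < ∑ j, ∑ k, z (e (j, k)) :=
        Finset.sum_lt_sum (fun j _ => (hblock j).1)
          ⟨j0, Finset.mem_univ _, lt_of_le_of_ne (hblock j0).1 (Ne.symm hj0)⟩
      rw [← hsum, heq, hconst] at hlt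
      exact lt_irrefl _ hlt
    obtain ⟨p, rfl⟩ := e.surjective i
    have := (hblock p.1).2 (hball p.1) p.2
    simpa using this
  -- real-side setup
  set c : ℝ := ((m * d : ℕ) : ℝ) with hc
  have hlin : IsLinearMap ℝ (fun x : Fin (m * d) → ℝ => ∑ i, x i) := by
    constructor
    · intro x y; exact Finset.sum_add_distrib
    · intro r x
      simp only [Pi.smul_apply, smul_eq_mul]
      rw [Finset.mul_sum]
  have hfone : ∑ _i : Fin (m * d), (1 : ℝ) = c := by
    simp [hc]
  have hTsub : {x : Fin (m * d) → ℝ | ∃ z : Fin (m * d) → ℤ,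
      (∀ i, 0 ≤ z i) ∧ A.mulVec z = b ∧ x = fun i => (z i : ℝ)} ⊆
      insert (fun _ => (1 : ℝ)) {x | c < ∑ i, x i} := by
    rintro x ⟨z, hz, hmvz, rfl⟩
    obtain ⟨hge, heqc⟩ := hint z hz hmvz
    rcases eq_or_lt_of_le hge with heq | hlt
    · left
      have hz1 := heqc heq.symm
      funext i
      simp [hz1 i]
    · right
      show c < ∑ i, ((z i : ℝ))
      have : ((∑ i, z i : ℤ) : ℝ) = ∑ i, ((z i : ℝ)) := by push_cast; rfl
      rw [hc, ← this]
      exact_mod_cast hlt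
  have hK : Convex ℝ (insert (fun _ => (1 : ℝ)) {x : Fin (m * d) → ℝ | c < ∑ i, x i}) := by
    intro x hx y hy a b' ha hb' hab
    have hsum : ∑ i, (a • x + b' • y) i = a * (∑ i, x i) + b' * (∑ i, y i) := by
      simp [Finset.sum_add_distrib, Finset.mul_sum]
    simp only [Set.mem_insert_iff, Set.mem_setOf_eq] at hx hy ⊢
    have hone : (∑ i : Fin (m * d), (fun _ => (1 : ℝ)) i) = c := by simpa using hfone
    rcases hx with rfl | hx <;> rcases hy with rfl | hy
    · left
      funext i
      simp only [Pi.add_apply, Pi.smul_apply, smul_eq_mul]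
      linarith
    · rcases eq_or_lt_of_le hb' with hb0 | hb0
      · left
        have ha1 : a = 1 := by linarith
        funext i
        simp [← hb0, ha1]
      · right
        rw [hsum, hone]
        nlinarith [mul_lt_mul_of_pos_left hy hb0]
    · rcases eq_or_lt_of_le ha with ha0 | ha0
      · left
        have hb1 : b' = 1 := by linarith
        funext i
        simp [← ha0, hb1]
      · right
        rw [hsum, hone]
        nlinarith [mul_lt_mul_of_pos_left hx ha0]
    · rcases eq_or_lt_of_le ha with ha0 | ha0
      · right
        rw [hsum]
        have hb1 : b' = 1 := by linarith
        rw [← ha0, hb1]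
        simpa using hy
      · right
        rw [hsum]
        nlinarith [mul_lt_mul_of_pos_left hx ha0, mul_le_mul_of_nonneg_left (le_of_lt hy) hb']
  have hvertex : IsVertex (integerHull A b) (fun _ => 1) := by
    constructor
    · apply subset_convexHull
      refine ⟨fun _ => 1, fun i => zero_le_one, hones, ?_⟩
      funext i; simp
    · intro hmem
      have hPK : integerHull A b ⊆
          insert (fun _ => (1 : ℝ)) {x : Fin (m * d) → ℝ | c < ∑ i, x i} :=
        convexHull_min hTsub hK
      have hsub : integerHull A b \ {fun _ => (1 : ℝ)} ⊆ {x : Fin (m * d) → ℝ | c < ∑ i, x i} := by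
        rintro x ⟨hxP, hxne⟩
        rcases hPK hxP with rfl | hx
        · exact absurd rfl hxne
        · exact hx
      have hfinal := convexHull_min hsub (convex_halfSpace_gt hlin c) hmem
      simp only [Set.mem_setOf_eq] at hfinal
      rw [hfone] at hfinal
      exact lt_irrefl _ hfinal
  refine ⟨A, b, ?_, ?_, hvertex, ?_, ?_⟩
  · intro j i
    simp only [hA]
    by_cases hcond : (i : ℕ) / d = (j : ℕ)
    · rw [if_pos hcond]
      rw [abs_of_nonneg (by positivity)]
      apply pow_le_pow_right₀ (by norm_num)
      have := Nat.mod_lt (i : ℕ) hd0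
      omega
    · rw [if_neg hcond]
      simp
  · refine ⟨⟨0, hm⟩, ⟨d - 1, ?_⟩, ?_⟩
    · have : d ≤ m * d := Nat.le_mul_of_pos_left d hm
      omega
    · simp only [hA]
      rw [if_pos]
      · rw [Nat.mod_eq_of_lt (by omega)]
        rw [abs_of_nonneg (by positivity)]
      · rw [Nat.div_eq_of_lt (by omega)]
  · rw [Function.support_const one_ne_zero, Set.ncard_univ]
    simp
  · have hlogb : Real.logb 2 ((2 : ℝ) ^ (d - 1)) = ((d - 1 : ℕ) : ℝ) := by
      rw [Real.logb_pow, Real.logb_self_eq_one one_lt_two, mul_one]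
    rw [hlogb, Nat.cast_sub hd]
    show c = _
    rw [hc]
    push_cast
    ring
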